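/- T_n is even for all n ≥ 2, where T_n = (1/n)·sum over d|n of binomial(2d-1,d)·φ(n/d); equivalently, the number of size-n submultisets of {0,...,n-1} summing to 0 mod n is even for n ≥ 2. -/

import Mathlib

open Finset Filter Topology

noncomputable section

/-- number of size-`k` submultisets of `{0,…,n-1}` whose sum is ≡ 0 mod `n` -/
def symCount (n k : ℕ) : ℕ :=
  Nat.card {s : Sym (Fin n) k // ((s : Multiset (Fin n)).map Fin.val).sum % n = 0}

/-- `T n`: number of size-`n` submultisets of `{0,…,n-1}` summing to `0` mod `n`
(= number of rooted unlabelled cyclically distinct plane trees with `n` edges). -/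
def planeTreeT (n : ℕ) : ℕ := symCount n n

/-- Walkup's formula expression `(1/n) ∑_{d ∣ n} C(2d-1, d) φ(n/d)` (exact division). -/
def walkupT (n : ℕ) : ℕ :=
  (∑ d ∈ n.divisors, Nat.choose (2 * d - 1) d * Nat.totient (n / d)) / n

/-- number of up-steps strictly before position `i` in a monotone lattice path
encoded by `f : Fin m → Bool` (`true` = up-step, `false` = right-step). -/
def upsBefore {m : ℕ} (f : Fin m → Bool) (i : Fin m) : ℕ :=
  Nat.card {j : Fin m // j < i ∧ f j = true}

/-- area below/right of a monotone lattice path: sum over right-steps of the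
number of up-steps before them. -/
def pathArea {m : ℕ} (f : Fin m → Bool) : ℕ :=
  ∑ i : Fin m, if f i = false then upsBefore f i else 0

/-- number of up-steps of a monotone lattice path. -/
def upCount {m : ℕ} (f : Fin m → Bool) : ℕ := Nat.card {i : Fin m // f i = true}

/-- the `m`-th increment (`±1`) of a walk of length `2n` encoded by
`ε : Fin (2n) → Bool` (`true` = `+1`); `0` out of range. -/
def stepVal (n : ℕ) (ε : Fin (2 * n) → Bool) (m : ℕ) : ℤ :=
  if h : m < 2 * n then (if ε ⟨m, h⟩ then 1 else -1) else 0

/-- position of the walk after `k` steps. -/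
def wpos (n : ℕ) (ε : Fin (2 * n) → Bool) (k : ℕ) : ℤ :=
  ∑ i ∈ Finset.range k, stepVal n ε i

/-- a walk of length `2n` is a bridge if it returns to `0`. -/
def IsBridge (n : ℕ) (ε : Fin (2 * n) → Bool) : Prop := wpos n ε (2 * n) = 0

/-- partial diamond area `σ_{2k} = (1/2) ∑_{i=1}^k B_{2i}` (the division is exact). -/
def psig (n : ℕ) (ε : Fin (2 * n) → Bool) (k : ℕ) : ℤ :=
  (∑ i ∈ Finset.range k, wpos n ε (2 * (i + 1))) / 2

/-- diamond area `σ(B) = (1/2) ∑_{i=1}^n B_{2i}`. -/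
def dsigma (n : ℕ) (ε : Fin (2 * n) → Bool) : ℤ := psig n ε n

/-- a bridge is graphical if `σ(B) = 0` and `σ_{2k} ≥ 0` for all `1 ≤ k < n`. -/
def IsGraphical (n : ℕ) (ε : Fin (2 * n) → Bool) : Prop :=
  IsBridge n ε ∧ dsigma n ε = 0 ∧ ∀ k, 1 ≤ k → k < n → 0 ≤ psig n ε k

/-- `B_n`: the number of graphical bridges of length `2n`. -/
def graphicalCount (n : ℕ) : ℕ := Nat.card {ε : Fin (2 * n) → Bool // IsGraphical n ε}



lemma even_iff_even_fixed {α : Type*} [Fintype α] [DecidableEq α] (f : α → α)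
    (hf : ∀ x, f (f x) = x) :
    Even (Fintype.card α) ↔ Even (Fintype.card {x // f x = x}) := by
  classical
  let e := Fintype.equivFin α
  have hcard : Fintype.card α =
      Fintype.card {x // f x = x} + (univ.filter fun x => ¬ f x = x).card := by
    rw [Fintype.card_subtype]
    rw [Finset.card_filter_add_card_filter_not]
    exact (Finset.card_univ).symm
  have hAB : ((univ.filter fun x => ¬ f x = x).card) =
      2 * ((univ.filter fun x => e (f x) < e x).card) := by
    have hsplit : (univ.filter fun x => ¬ f x = x) =
        (univ.filter fun x => e (f x) < e x) ∪ (univ.filter fun x => e x < e (f x)) := by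
      ext x
      simp only [mem_filter, mem_union, mem_univ, true_and]
      constructor
      · intro hx
        rcases lt_trichotomy (e (f x)) (e x) with h | h | h
        · exact Or.inl h
        · exact absurd (e.injective h) hx
        · exact Or.inr h
      · rintro (h | h) hx <;> simp [hx] at h
    have hdisj : Disjoint (univ.filter fun x => e (f x) < e x)
        (univ.filter fun x => e x < e (f x)) := by
      rw [Finset.disjoint_filter]
      intro x _ h1 h2
      exact absurd (h1.trans h2) (lt_irrefl _)
    have hbij : ((univ.filter fun x => e (f x) < e x).card) =
        ((univ.filter fun x => e x < e (f x)).card) := by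
      apply Finset.card_bij (fun a _ => f a)
      · intro a ha
        simp only [mem_filter, mem_univ, true_and] at ha ⊢
        rw [hf]; exact ha
      · intro a ha b hb hab
        have := congrArg f hab
        rwa [hf, hf] at this
      · intro b hb
        simp only [mem_filter, mem_univ, true_and] at hb
        exact ⟨f b, by simp only [mem_filter, mem_univ, true_and, hf]; exact hb, hf b⟩
    rw [hsplit, Finset.card_union_of_disjoint hdisj, ← hbij, two_mul]
  rw [hcard, hAB]
  simp [Nat.even_add, parity_simps]

variable {α : Type*} [Fintype α] [DecidableEq α]

/-- multiset over a fintype ≃ count function -/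
noncomputable def msEquiv : Multiset α ≃ (α → ℕ) :=
  Multiset.toFinsupp.toEquiv.trans Finsupp.equivFunOnFinite

lemma msEquiv_apply (s : Multiset α) (x : α) : msEquiv s x = s.count x := by
  simp [msEquiv, Multiset.toFinsupp]

lemma msEquiv_card (s : Multiset α) : Multiset.card s = ∑ x, msEquiv s x := by
  simp [msEquiv_apply, Multiset.sum_count_eq_card]

/-- Sym α k ≃ functions with sum k -/
noncomputable def symEquivCounts (k : ℕ) : Sym α k ≃ {f : α → ℕ // ∑ x, f x = k} :=
  Equiv.subtypeEquiv (p := fun s : Multiset α => Multiset.card s = k) msEquiv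
    (fun s => by beta_reduce; rw [msEquiv_card (α := α) s])

lemma fin_neg_val {n : ℕ} [NeZero n] (x : Fin n) (hx : x ≠ 0) : (-x).val = n - x.val := by
  have h0 : ((-x) + x) = 0 := neg_add_cancel x
  have hval : ((-x).val + x.val) % n = 0 := by
    have := congrArg Fin.val h0
    rwa [Fin.val_add, Fin.val_zero] at this
  have hd : n ∣ ((-x).val + x.val) := Nat.dvd_of_mod_eq_zero hval
  obtain ⟨c, hc⟩ := hd
  have h1 : (-x).val < n := (-x).isLt
  have h2 : x.val < n := x.isLt
  have h3 : x.val ≠ 0 := by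
    intro h
    exact hx (Fin.ext (by simp [h, Fin.val_zero]))
  rcases Nat.lt_or_ge c 2 with hc2 | hc2
  · interval_cases c <;> omega
  · nlinarith

def pad (m : ℕ) (f : Fin (2*m+1) → ℕ) : ℕ → ℕ := fun i => if h : i < 2*m+1 then f ⟨i, h⟩ else 0

def khalf (m : ℕ) (f : Fin (2*m+1) → ℕ) : ℕ := ∑ j ∈ range m, pad m f (j+1)

lemma sum_univ_eq_pad (m : ℕ) (f : Fin (2*m+1) → ℕ) :
    ∑ x, f x = ∑ i ∈ range (2*m+1), pad m f i := by
  rw [← Fin.sum_univ_eq_sum_range (pad m f)]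
  exact Finset.sum_congr rfl fun x _ => by simp [pad, x.isLt]

lemma sum_ident (m : ℕ) (f : Fin (2*m+1) → ℕ) (hsymm : ∀ x, f (-x) = f x) :
    ∑ x, f x = pad m f 0 + 2 * khalf m f := by
  rw [sum_univ_eq_pad]
  rw [Finset.sum_range_succ' (pad m f)]
  have hsplit : ∑ i ∈ range (2*m), pad m f (i+1)
      = ∑ i ∈ range m, pad m f (i+1) + ∑ i ∈ range m, pad m f (m+i+1) := by
    rw [range_eq_Ico, ← Finset.sum_Ico_consecutive _ (Nat.zero_le m) (by omega : m ≤ 2*m)]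
    have e2 : ∑ i ∈ Ico m (2*m), pad m f (i+1) = ∑ i ∈ range m, pad m f (m+i+1) := by
      rw [Finset.sum_Ico_eq_sum_range]
      have hm : 2*m - m = m := by omega
      rw [hm]
    rw [e2, ← range_eq_Ico]
  have hrefl : ∑ i ∈ range m, pad m f (m+i+1) = ∑ i ∈ range m, pad m f (i+1) := by
    have hterm : ∀ i ∈ range m, pad m f (m+i+1) = pad m f (m-i) := by
      intro i hi
      rw [mem_range] at hi
      have h1 : m + i + 1 < 2*m+1 := by omega
      have h2 : m - i < 2*m+1 := by omega
      have h3 : (⟨m+i+1, h1⟩ : Fin (2*m+1)) = -⟨m-i, h2⟩ := by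
        have hne : (⟨m-i, h2⟩ : Fin (2*m+1)) ≠ 0 := by
          intro h
          have := congrArg Fin.val h
          simp [Fin.val_zero] at this
          omega
        apply Fin.ext
        rw [fin_neg_val _ hne]
        simp
        omega
      simp only [pad, dif_pos h1, dif_pos h2, h3]
      exact hsymm _
    rw [Finset.sum_congr rfl hterm]
    have := Finset.sum_range_reflect (fun j => pad m f (j+1)) m
    rw [← this]
    apply Finset.sum_congr rfl
    intro i hi
    rw [mem_range] at hi
    congr 1
    omega
  rw [hsplit, hrefl, khalf]
  ring

def oddTo (m : ℕ) (f : Fin (2*m+1) → ℕ) : Fin (m+1) → ℕ :=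
  fun i => if h : i.val < m then f ⟨i.val+1, by omega⟩ else m - khalf m f

def oddInv (m : ℕ) (g : Fin (m+1) → ℕ) : Fin (2*m+1) → ℕ :=
  fun x => if hx : x.val = 0 then 2 * g (Fin.last m) + 1
    else if h : x.val ≤ m then g ⟨x.val - 1, by omega⟩ else g ⟨2*m - x.val, by omega⟩

lemma khalf_eq_fin_sum (m : ℕ) (f : Fin (2*m+1) → ℕ) :
    khalf m f = ∑ i : Fin m, f ⟨i.val+1, by omega⟩ := by
  rw [khalf, ← Fin.sum_univ_eq_sum_range (fun j => pad m f (j+1))]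
  refine Finset.sum_congr rfl fun i _ => ?_
  simp only [pad]
  rw [dif_pos (by omega : i.val + 1 < 2*m+1)]

lemma khalf_le (m : ℕ) (f : Fin (2*m+1) → ℕ) (hsymm : ∀ x, f (-x) = f x)
    (hsum : ∑ x, f x = 2*m+1) : khalf m f ≤ m := by
  have := sum_ident m f hsymm
  omega

lemma sum_oddTo (m : ℕ) (f : Fin (2*m+1) → ℕ) (hsymm : ∀ x, f (-x) = f x)
    (hsum : ∑ x, f x = 2*m+1) : ∑ i, oddTo m f i = m := by
  rw [Fin.sum_univ_castSucc]
  have h1 : ∀ i : Fin m, oddTo m f i.castSucc = f ⟨i.val+1, by omega⟩ := by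
    intro i
    simp only [oddTo, Fin.coe_castSucc, dif_pos i.isLt]
  have h2 : oddTo m f (Fin.last m) = m - khalf m f := by
    simp [oddTo]
  rw [h2, Finset.sum_congr rfl (fun i _ => h1 i), ← khalf_eq_fin_sum]
  have := khalf_le m f hsymm hsum
  omega

lemma symm_oddInv (m : ℕ) (g : Fin (m+1) → ℕ) (x : Fin (2*m+1)) :
    oddInv m g (-x) = oddInv m g x := by
  by_cases hx : x = 0
  · rw [hx, neg_zero]
  · have hx0 : x.val ≠ 0 := by
      intro h; exact hx (Fin.ext (by rw [h, Fin.val_zero]))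
    have hxlt : x.val < 2*m+1 := x.isLt
    have hval : (-x).val = 2*m+1 - x.val := fin_neg_val x hx
    simp only [oddInv]
    rcases le_or_gt x.val m with hle | hgt
    · have h1 : ¬((-x).val = 0) := by omega
      have h2 : ¬((-x).val ≤ m) := by omega
      rw [dif_neg h1, dif_neg h2, dif_neg hx0, dif_pos hle]
      congr 1
      apply Fin.ext
      simp only
      omega
    · have h1 : ¬((-x).val = 0) := by omega
      have h2 : (-x).val ≤ m := by omega
      rw [dif_neg h1, dif_pos h2, dif_neg hx0, dif_neg (by omega : ¬(x.val ≤ m))]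
      congr 1
      apply Fin.ext
      simp only
      omega

lemma glast_le (m : ℕ) (g : Fin (m+1) → ℕ) (hg : ∑ i, g i = m) : g (Fin.last m) ≤ m := by
  have h := Finset.single_le_sum (f := g) (fun i _ => Nat.zero_le _) (Finset.mem_univ (Fin.last m))
  omega

lemma khalf_oddInv (m : ℕ) (g : Fin (m+1) → ℕ) (hg : ∑ i, g i = m) :
    khalf m (oddInv m g) = m - g (Fin.last m) := by
  rw [khalf_eq_fin_sum]
  have h1 : ∀ i : Fin m, oddInv m g ⟨i.val+1, by omega⟩ = g i.castSucc := by
    intro i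
    have hi := i.isLt
    simp only [oddInv, dif_neg (by omega : ¬(i.val+1 = 0)), dif_pos (by omega : i.val+1 ≤ m)]
    congr 1
  rw [Finset.sum_congr rfl (fun i _ => h1 i)]
  have := Fin.sum_univ_castSucc g
  rw [hg] at this
  omega

lemma sum_oddInv (m : ℕ) (g : Fin (m+1) → ℕ) (hg : ∑ i, g i = m) :
    ∑ x, oddInv m g x = 2*m+1 := by
  rw [sum_ident m (oddInv m g) (symm_oddInv m g), khalf_oddInv m g hg]
  have hp : pad m (oddInv m g) 0 = 2 * g (Fin.last m) + 1 := by
    simp [pad, oddInv]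
  rw [hp]
  have := glast_le m g hg
  omega

lemma oddInv_oddTo (m : ℕ) (f : Fin (2*m+1) → ℕ) (hsymm : ∀ x, f (-x) = f x)
    (hsum : ∑ x, f x = 2*m+1) : oddInv m (oddTo m f) = f := by
  have hk := khalf_le m f hsymm hsum
  have hid := sum_ident m f hsymm
  rw [hsum] at hid
  funext x
  have hxlt : x.val < 2*m+1 := x.isLt
  by_cases hx0 : x.val = 0
  · have hx : x = ⟨0, by omega⟩ := Fin.ext hx0
    simp only [oddInv, dif_pos hx0, oddTo, dif_neg (by simp [Fin.last] : ¬((Fin.last m).val < m))]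
    have hpad : pad m f 0 = f ⟨0, by omega⟩ := by simp [pad]
    rw [hx]
    rw [hpad] at hid
    omega
  · rcases le_or_gt x.val m with hle | hgt
    · simp only [oddInv, dif_neg hx0, dif_pos hle, oddTo,
        dif_pos (by omega : x.val - 1 < m)]
      congr 1
      apply Fin.ext
      simp only
      omega
    · simp only [oddInv, dif_neg hx0, dif_neg (by omega : ¬(x.val ≤ m)), oddTo,
        dif_pos (by omega : 2*m - x.val < m)]
      have hne : x ≠ 0 := by
        intro h; exact hx0 (by rw [h, Fin.val_zero])
      have hval : (-x).val = 2*m+1 - x.val := fin_neg_val x hne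
      have : (⟨2*m - x.val + 1, by omega⟩ : Fin (2*m+1)) = -x := by
        apply Fin.ext; simp only; omega
      rw [this, hsymm]

lemma oddTo_oddInv (m : ℕ) (g : Fin (m+1) → ℕ) (hg : ∑ i, g i = m) :
    oddTo m (oddInv m g) = g := by
  funext i
  have hilt : i.val < m + 1 := i.isLt
  by_cases hi : i.val < m
  · simp only [oddTo, dif_pos hi, oddInv, dif_neg (by omega : ¬(i.val+1 = 0)),
      dif_pos (by omega : i.val+1 ≤ m)]
    exact congrArg g (Fin.ext (show i.val + 1 - 1 = i.val by omega))
  · have hlast : i = Fin.last m := Fin.ext (by simp only [Fin.val_last]; omega)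
    simp only [oddTo, dif_neg hi]
    rw [khalf_oddInv m g hg, hlast]
    have := glast_le m g hg
    omega

noncomputable def oddEquiv (m : ℕ) :
    {f : Fin (2*m+1) → ℕ // (∑ x, f x = 2*m+1) ∧ ∀ x, f (-x) = f x}
      ≃ {g : Fin (m+1) → ℕ // ∑ i, g i = m} where
  toFun p := ⟨oddTo m p.1, sum_oddTo m p.1 p.2.2 p.2.1⟩
  invFun q := ⟨oddInv m q.1, sum_oddInv m q.1 q.2, symm_oddInv m q.1⟩
  left_inv p := Subtype.ext (oddInv_oddTo m p.1 p.2.2 p.2.1)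
  right_inv q := Subtype.ext (oddTo_oddInv m q.1 q.2)

lemma multiset_map_eq_self_iff {α : Type*} [DecidableEq α] {g : α → α}
    (hg : Function.Involutive g) (s : Multiset α) :
    s.map g = s ↔ ∀ x, s.count (g x) = s.count x := by
  constructor
  · intro h x
    calc s.count (g x) = (s.map g).count (g x) := by rw [h]
    _ = s.count x := Multiset.count_map_eq_count' g s hg.injective x
  · intro h
    ext x
    calc (s.map g).count x = (s.map g).count (g (g x)) := by rw [hg x]
    _ = s.count (g x) := Multiset.count_map_eq_count' g s hg.injective (g x)
    _ = s.count x := h x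

lemma choose_central_even (m : ℕ) (hm : 1 ≤ m) : Even (Nat.choose (2*m) m) := by
  obtain ⟨t, rfl⟩ : ∃ t, m = t + 1 := ⟨m - 1, by omega⟩
  have h1 : 2*(t+1) = (2*t+1) + 1 := by ring
  rw [h1, Nat.choose_succ_succ]
  have h2 : Nat.choose (2*t+1) ((2*t+1) - (t+1)) = Nat.choose (2*t+1) (t+1) :=
    Nat.choose_symm (by omega)
  have h3 : (2*t+1) - (t+1) = t := by omega
  rw [h3] at h2
  rw [h2]
  exact ⟨_, rfl⟩

section RevLemmas
variable (n : ℕ)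

lemma rev_sum_eq (s : Sym (Fin n) n) :
    (((Sym.map Fin.rev s : Sym (Fin n) n) : Multiset (Fin n)).map Fin.val).sum
      + (((s : Multiset (Fin n)).map Fin.val).sum) = n * (n - 1) := by
  rw [Sym.coe_map, Multiset.map_map, ← Multiset.sum_map_add]
  have h : ∀ x ∈ (s : Multiset (Fin n)), (Fin.val ∘ Fin.rev) x + Fin.val x = n - 1 := by
    intro x _
    have := x.isLt
    simp only [Function.comp_apply, Fin.val_rev]
    omega
  rw [Multiset.map_congr rfl h]
  have hcard : Multiset.card (s : Multiset (Fin n)) = n := s.2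
  rw [Multiset.map_const', Multiset.sum_replicate, hcard, smul_eq_mul]

lemma neg_sum_dvd [NeZero n] (s : Sym (Fin n) n) :
    n ∣ ((((Sym.map (fun x => -x) s : Sym (Fin n) n) : Multiset (Fin n)).map Fin.val).sum
      + (((s : Multiset (Fin n)).map Fin.val).sum)) := by
  rw [Sym.coe_map, Multiset.map_map, ← Multiset.sum_map_add]
  apply Multiset.dvd_sum
  intro y hy
  rw [Multiset.mem_map] at hy
  obtain ⟨x, _, rfl⟩ := hy
  by_cases hx : x = 0
  · subst hx
    simp [Fin.val_zero]
  · have := fin_neg_val x hx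
    have hx0 : x.val ≠ 0 := by
      intro h; exact hx (Fin.ext (by rw [h, Fin.val_zero]))
    have := x.isLt
    simp only [Function.comp_apply]
    have heq : (Fin.val (-x) + Fin.val x) = n := by omega
    rw [heq]

end RevLemmas
section Main

theorem treeT_even' (n : ℕ) (hn : 2 ≤ n) :
    Even (Nat.card {s : Sym (Fin n) n //
      ((s : Multiset (Fin n)).map Fin.val).sum % n = 0}) := by
  haveI : NeZero n := ⟨by omega⟩
  rw [Nat.card_eq_fintype_card]
  rcases Nat.even_or_odd n with he | ho
  · -- even case: Fin.rev involution, no fixed points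
    have pres : ∀ s : Sym (Fin n) n, ((s : Multiset (Fin n)).map Fin.val).sum % n = 0 →
        (((Sym.map Fin.rev s : Sym (Fin n) n) : Multiset (Fin n)).map Fin.val).sum % n = 0 := by
      intro s hs
      have hkey := rev_sum_eq n s
      have hd : n ∣ ((s : Multiset (Fin n)).map Fin.val).sum := Nat.dvd_of_mod_eq_zero hs
      have h2 : n ∣ n * (n-1) := Dvd.intro _ rfl
      have h3 := Nat.dvd_sub h2 hd
      have h4 : n * (n-1) - ((s : Multiset (Fin n)).map Fin.val).sum
          = (((Sym.map Fin.rev s : Sym (Fin n) n) : Multiset (Fin n)).map Fin.val).sum := by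
        omega
      rw [h4] at h3
      obtain ⟨c, hc⟩ := h3
      rw [hc]
      exact Nat.mul_mod_right n c
    set σ : {s : Sym (Fin n) n // ((s : Multiset (Fin n)).map Fin.val).sum % n = 0} →
        {s : Sym (Fin n) n // ((s : Multiset (Fin n)).map Fin.val).sum % n = 0} :=
      fun p => ⟨Sym.map Fin.rev p.1, pres p.1 p.2⟩ with hσ
    have hinv : ∀ p, σ (σ p) = p := by
      intro p
      apply Subtype.ext
      show Sym.map Fin.rev (Sym.map Fin.rev p.1) = p.1
      rw [Sym.map_map]
      have : (Fin.rev ∘ Fin.rev : Fin n → Fin n) = fun x => x := funext Fin.rev_rev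
      rw [this]
      exact Sym.map_id' p.1
    rw [even_iff_even_fixed σ hinv]
    have hempty : IsEmpty {p : {s : Sym (Fin n) n //
        ((s : Multiset (Fin n)).map Fin.val).sum % n = 0} // σ p = p} := by
      constructor
      rintro ⟨⟨s, hs⟩, hfix⟩
      have hmap : Sym.map Fin.rev s = s := congrArg Subtype.val hfix
      have hkey := rev_sum_eq n s
      rw [hmap] at hkey
      obtain ⟨c, hc⟩ := Nat.dvd_of_mod_eq_zero hs
      rw [hc] at hkey
      have h2 : n * (2*c) = n * (n-1) := by ring_nf; ring_nf at hkey; omega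
      have h3 : 2*c = n - 1 := Nat.eq_of_mul_eq_mul_left (by omega) h2
      obtain ⟨t, ht⟩ := he
      omega
    rw [Fintype.card_eq_zero]
    exact Even.zero
  · -- odd case: negation involution
    obtain ⟨m, hm⟩ := ho
    subst hm
    set n := 2*m+1 with hn'
    have hm1 : 1 ≤ m := by omega
    have pres : ∀ s : Sym (Fin n) n, ((s : Multiset (Fin n)).map Fin.val).sum % n = 0 →
        (((Sym.map (fun x => -x) s : Sym (Fin n) n) : Multiset (Fin n)).map Fin.val).sum % n = 0 := by
      intro s hs
      have hd := neg_sum_dvd n s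
      have hN : n ∣ ((s : Multiset (Fin n)).map Fin.val).sum := Nat.dvd_of_mod_eq_zero hs
      have h3 := Nat.dvd_sub hd hN
      have h4 : (((Sym.map (fun x => -x) s : Sym (Fin n) n) : Multiset (Fin n)).map Fin.val).sum
          + ((s : Multiset (Fin n)).map Fin.val).sum
          - ((s : Multiset (Fin n)).map Fin.val).sum
          = (((Sym.map (fun x => -x) s : Sym (Fin n) n) : Multiset (Fin n)).map Fin.val).sum := by
        omega
      rw [h4] at h3
      obtain ⟨c, hc⟩ := h3
      rw [hc]
      exact Nat.mul_mod_right n c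
    set σ : {s : Sym (Fin n) n // ((s : Multiset (Fin n)).map Fin.val).sum % n = 0} →
        {s : Sym (Fin n) n // ((s : Multiset (Fin n)).map Fin.val).sum % n = 0} :=
      fun p => ⟨Sym.map (fun x => -x) p.1, pres p.1 p.2⟩ with hσ
    have hinv : ∀ p, σ (σ p) = p := by
      intro p
      apply Subtype.ext
      show Sym.map (fun x => -x) (Sym.map (fun x => -x) p.1) = p.1
      rw [Sym.map_map]
      have : ((fun x : Fin n => -x) ∘ (fun x : Fin n => -x)) = fun x => x := by
        funext x; simp
      rw [this]
      exact Sym.map_id' p.1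
    rw [even_iff_even_fixed σ hinv]
    -- compute fixed point count
    have himp : ∀ s : Sym (Fin n) n, Sym.map (fun x => -x) s = s →
        ((s : Multiset (Fin n)).map Fin.val).sum % n = 0 := by
      intro s h
      have hd := neg_sum_dvd n s
      rw [h] at hd
      have h2 : n ∣ 2 * ((s : Multiset (Fin n)).map Fin.val).sum := by
        rwa [two_mul]
      have hcop : Nat.Coprime n 2 := by
        have h2n : ¬ (2 ∣ n) := by
          rintro ⟨c, hc⟩
          omega
        exact Nat.coprime_comm.mp (Nat.Prime.coprime_iff_not_dvd Nat.prime_two |>.mpr h2n)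
      have h3 := hcop.dvd_of_dvd_mul_left h2
      obtain ⟨c, hc⟩ := h3
      rw [hc]
      exact Nat.mul_mod_right n c
    have hiff : ∀ s : Sym (Fin n) n, (Sym.map (fun x => -x) s = s) ↔
        (∀ x : Fin n, ((symEquivCounts n) s).1 (-x) = ((symEquivCounts n) s).1 x) := by
      intro s
      have hval : ∀ x : Fin n, ((symEquivCounts n) s).1 x = (s : Multiset (Fin n)).count x := by
        intro x
        exact msEquiv_apply _ _
      have hInv : Function.Involutive (fun x : Fin n => -x) := fun x => neg_neg x
      constructor
      · intro h x
        rw [hval, hval]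
        exact (multiset_map_eq_self_iff hInv (s : Multiset (Fin n))).mp
          (by rw [← Sym.coe_map, h]) x
      · intro h
        have h2 : ((s : Multiset (Fin n)).map (fun x => -x)) = (s : Multiset (Fin n)) := by
          apply (multiset_map_eq_self_iff hInv _).mpr
          intro x
          have := h x
          rwa [hval, hval] at this
        rw [← Sym.coe_map] at h2
        exact Subtype.ext h2
    have e1 : {p : {s : Sym (Fin n) n // ((s : Multiset (Fin n)).map Fin.val).sum % n = 0} //
          σ p = p}
        ≃ {s : Sym (Fin n) n // ((s : Multiset (Fin n)).map Fin.val).sum % n = 0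
            ∧ Sym.map (fun x => -x) s = s} := by
      refine Equiv.trans (Equiv.subtypeEquivRight fun p => ?_)
        (Equiv.subtypeSubtypeEquivSubtypeInter _ _)
      exact Subtype.ext_iff
    have e2 : {s : Sym (Fin n) n // ((s : Multiset (Fin n)).map Fin.val).sum % n = 0
          ∧ Sym.map (fun x => -x) s = s}
        ≃ {s : Sym (Fin n) n // Sym.map (fun x => -x) s = s} :=
      Equiv.subtypeEquivRight fun s => ⟨And.right, fun h => ⟨himp s h, h⟩⟩
    have e3 : {s : Sym (Fin n) n // Sym.map (fun x => -x) s = s}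
        ≃ {f : Fin n → ℕ // (∑ x, f x = n) ∧ ∀ x, f (-x) = f x} :=
      Equiv.trans (Equiv.subtypeEquiv (symEquivCounts n) hiff)
        (Equiv.subtypeSubtypeEquivSubtypeInter _ _)
    have e4 := oddEquiv m
    have e5 := (symEquivCounts (α := Fin (m+1)) m).symm
    have hcard : Fintype.card {p : {s : Sym (Fin n) n //
          ((s : Multiset (Fin n)).map Fin.val).sum % n = 0} // σ p = p}
        = Fintype.card (Sym (Fin (m+1)) m) := by
      rw [← Nat.card_eq_fintype_card, ← Nat.card_eq_fintype_card]
      exact Nat.card_congr (((e1.trans e2).trans e3).trans (e4.trans e5))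
    rw [hcard, Sym.card_sym_eq_choose]
    have : Fintype.card (Fin (m+1)) + m - 1 = 2*m := by simp; omega
    rw [this]
    exact choose_central_even m hm1

end Main


theorem treeT_even (n : ℕ) (hn : 2 ≤ n) : Even (planeTreeT n) := by
  unfold planeTreeT symCount
  exact treeT_even' n hn
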